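/- Let G be a finite group which is not cyclic and let N be a normal subgroup of G with |G : N| = p for some prime p. Then m_{G,N} = (1/|G|)·Σ_{C ≤ N, C cyclic} (1 − χ(T_C(G)))·φ(|C|), where the sum is over all cyclic subgroups C of N. -/

import Mathlib

noncomputable instance subgroupFintype (G : Type*) [Group G] [Finite G] :
    Fintype (Subgroup G) :=
  Fintype.ofFinite _

open Classical in
/-- The Möbius function of the lattice of subgroups of `G`, ordered by inclusion. -/
noncomputable def subgroupMu (G : Type*) [Group G] [Finite G] (X Y : Subgroup G) : ℤ :=
  letI : LocallyFiniteOrder (Subgroup G) := Fintype.toLocallyFiniteOrder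
  IncidenceAlgebra.mu ℤ X Y

open Classical in
/-- Bouc's rational number `m_{G,N} = (1/|G|) · Σ_{X ≤ G, XN = G} |X| · μ(X, G)`. -/
noncomputable def mBouc (G : Type*) [Group G] [Finite G] (N : Subgroup G) : ℚ :=
  (1 / (Nat.card G : ℚ)) *
    ∑ X : Subgroup G, if X ⊔ N = ⊤ then (Nat.card X : ℚ) * ((subgroupMu G X ⊤ : ℤ) : ℚ) else 0

/-- The poset `T_C(G)` of all subgroups `X` of `G` with `C ≤ X`, `X` a proper subgroup
of `G`, and `X` not contained in `N`, ordered by inclusion. -/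
def TCposet (G : Type*) [Group G] (N C : Subgroup G) : Set (Subgroup G) :=
  {X | C ≤ X ∧ X < ⊤ ∧ ¬ X ≤ N}

/-- `chainCount G N C i` is the number `c_i` of strictly increasing chains
`X_0 < X_1 < ⋯ < X_i` of elements of `T_C(G)`. -/
noncomputable def chainCount (G : Type*) [Group G] [Finite G] (N C : Subgroup G) (i : ℕ) : ℕ :=
  Nat.card {s : LTSeries (TCposet G N C) // s.length = i}

/-- The Euler characteristic `χ(T_C(G)) = Σ_{i ≥ 0} (-1)^i c_i` of (the geometric
realization of the nerve of) the poset `T_C(G)`. -/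
noncomputable def eulerCharTC (G : Type*) [Group G] [Finite G] (N C : Subgroup G) : ℤ :=
  ∑ᶠ i : ℕ, (-1 : ℤ) ^ i * chainCount G N C i

/-! ### Auxiliary chain-counting machinery on a finite poset -/

section ChainAux

open Finset

variable {α : Type*} [PartialOrder α] [Fintype α]

open Classical in
/-- number of chains of `i+1` elements of `T`. -/
noncomputable def ccount (T : Set α) (i : ℕ) : ℕ :=
  (Finset.univ.filter fun f : Fin (i + 1) → α => StrictMono f ∧ ∀ k, f k ∈ T).card

open Classical in
/-- number of chains of `i+1` elements of `T` with smallest element `x`. -/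
noncomputable def hcount (T : Set α) (i : ℕ) (x : α) : ℕ :=
  (Finset.univ.filter fun f : Fin (i + 1) → α =>
    (StrictMono f ∧ ∀ k, f k ∈ T) ∧ f 0 = x).card

open Classical in
lemma ccount_eq_sum (T : Set α) (i : ℕ) :
    ccount T i = ∑ x ∈ Finset.univ.filter (· ∈ T), hcount T i x := by
  unfold ccount hcount
  rw [Finset.card_eq_sum_card_fiberwise (f := fun f : Fin (i + 1) → α => f 0)
      (t := Finset.univ.filter (· ∈ T)) (fun f hf => by
        replace hf := Finset.mem_filter.1 hf
        simp only [Finset.mem_coe, mem_filter, mem_univ, true_and] at hf ⊢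
        exact hf.2 0)]
  exact Finset.sum_congr rfl fun x _ => by rw [Finset.filter_filter]

open Classical in
lemma hcount_zero (T : Set α) (x : α) : hcount T 0 x = if x ∈ T then 1 else 0 := by
  unfold hcount
  have hsm : ∀ f : Fin 1 → α, StrictMono f := by
    intro f a b h
    exact absurd (Subsingleton.elim a b) (ne_of_lt h)
  split_ifs with hx
  · rw [show (Finset.univ.filter fun f : Fin 1 → α =>
        (StrictMono f ∧ ∀ k, f k ∈ T) ∧ f 0 = x) = {fun _ => x} from ?_]
    · exact Finset.card_singleton _
    ext f
    simp only [mem_filter, mem_univ, true_and, Finset.mem_singleton]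
    constructor
    · rintro ⟨-, hf0⟩
      funext k
      rw [Subsingleton.elim k 0, hf0]
    · rintro rfl
      exact ⟨⟨hsm _, fun _ => hx⟩, rfl⟩
  · rw [Finset.card_eq_zero, Finset.filter_eq_empty_iff]
    rintro f - ⟨⟨-, hmem⟩, hf0⟩
    exact hx (hf0 ▸ hmem 0)

open Classical in
lemma hcount_of_not_mem (T : Set α) {x : α} (hx : x ∉ T) (i : ℕ) : hcount T i x = 0 := by
  unfold hcount
  rw [Finset.card_eq_zero, Finset.filter_eq_empty_iff]
  rintro f - ⟨⟨-, hmem⟩, hf0⟩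
  exact hx (hf0 ▸ hmem 0)

open Classical in
lemma hcount_of_big (T : Set α) (x : α) {i : ℕ} (hi : Fintype.card α ≤ i) :
    hcount T i x = 0 := by
  unfold hcount
  rw [Finset.card_eq_zero, Finset.filter_eq_empty_iff]
  rintro f - ⟨⟨hsm, -⟩, -⟩
  have := Fintype.card_le_of_injective f hsm.injective
  simp only [Fintype.card_fin] at this
  omega

open Classical in
lemma ccount_of_big (T : Set α) {i : ℕ} (hi : Fintype.card α ≤ i) :
    ccount T i = 0 := by
  unfold ccount
  rw [Finset.card_eq_zero, Finset.filter_eq_empty_iff]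
  rintro f - ⟨hsm, -⟩
  have := Fintype.card_le_of_injective f hsm.injective
  simp only [Fintype.card_fin] at this
  omega

variable [OrderTop α] [LocallyFiniteOrder α]

open Classical in
lemma hcount_succ (T : Set α) (hT1 : ∀ x ∈ T, x < ⊤) {x : α} (hx : x ∈ T) (i : ℕ) :
    hcount T (i + 1) x = ∑ y ∈ Finset.Ioo x ⊤, hcount T i y := by
  unfold hcount
  rw [Finset.card_eq_sum_card_fiberwise (f := fun f : Fin (i + 2) → α => f 1)
      (t := Finset.Ioo x ⊤) (fun f hf => by
        replace hf := Finset.mem_filter.1 hf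
        simp only [mem_filter, mem_univ, true_and] at hf
        obtain ⟨⟨hsm, hmem⟩, hf0⟩ := hf
        rw [Finset.mem_coe, Finset.mem_Ioo]
        refine ⟨hf0 ▸ hsm ?_, hT1 _ (hmem 1)⟩
        rw [Fin.lt_def]
        simp)]
  refine Finset.sum_congr rfl fun y hy => ?_
  rw [Finset.mem_Ioo] at hy
  rw [Finset.filter_filter]
  refine Finset.card_nbij' (fun f => f ∘ Fin.succ) (fun g => Fin.cons x g) ?_ ?_ ?_ ?_
  · rintro f hf
    replace hf := Finset.mem_filter.1 hf
    refine Finset.mem_filter.2 ⟨Finset.mem_univ _, ?_⟩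
    simp only [mem_filter, mem_univ, true_and] at hf ⊢
    obtain ⟨⟨⟨hsm, hmem⟩, hf0⟩, hf1⟩ := hf
    refine ⟨⟨hsm.comp Fin.strictMono_succ, fun k => hmem _⟩, ?_⟩
    show f (Fin.succ 0) = y
    rwa [Fin.succ_zero_eq_one]
  · rintro g hg
    replace hg := Finset.mem_filter.1 hg
    refine Finset.mem_filter.2 ⟨Finset.mem_univ _, ?_⟩
    simp only [mem_filter, mem_univ, true_and] at hg ⊢
    obtain ⟨⟨hsm, hmem⟩, hg0⟩ := hg
    have hcons_sm : StrictMono (Fin.cons x g : Fin (i + 2) → α) := by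
      rw [Fin.strictMono_iff_lt_succ]
      intro j
      induction j using Fin.cases with
      | zero =>
        rw [Fin.castSucc_zero, Fin.cons_zero, Fin.succ_zero_eq_one,
          show (1 : Fin (i + 2)) = Fin.succ 0 from (Fin.succ_zero_eq_one).symm, Fin.cons_succ,
          hg0]
        exact hy.1
      | succ j' =>
        rw [← Fin.succ_castSucc, Fin.cons_succ, Fin.cons_succ]
        exact hsm (Fin.castSucc_lt_succ (i := j'))
    refine ⟨⟨⟨hcons_sm, fun k => ?_⟩, Fin.cons_zero _ _⟩, ?_⟩
    · induction k using Fin.cases with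
      | zero => rw [Fin.cons_zero]; exact hx
      | succ k' => rw [Fin.cons_succ]; exact hmem k'
    · rw [show (1 : Fin (i + 2)) = Fin.succ 0 from (Fin.succ_zero_eq_one).symm, Fin.cons_succ,
        hg0]
  · intro f hf
    replace hf := Finset.mem_filter.1 hf
    simp only [mem_filter, mem_univ, true_and] at hf
    obtain ⟨⟨-, hf0⟩, -⟩ := hf
    rw [← hf0]
    exact Fin.cons_self_tail f
  · intro g hg
    funext k
    simp [Function.comp]

open Classical in
lemma hcount_key (T : Set α) (hT1 : ∀ x ∈ T, x < ⊤)
    (hT2 : ∀ x y, x ∈ T → x ≤ y → y < ⊤ → y ∈ T) :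
    ∀ (n : ℕ) (x : α), x ∈ T → (Finset.Ioo x ⊤).card = n →
      (∑ i ∈ Finset.range (Fintype.card α + 1), (-1 : ℤ) ^ i * hcount T i x)
        = - IncidenceAlgebra.mu ℤ x ⊤ := by
  intro n
  induction n using Nat.strong_induction_on with
  | _ n ih =>
    intro x hx hcard
    have hxtop : x < ⊤ := hT1 x hx
    rw [Finset.sum_range_succ']
    have h0 : (-1 : ℤ) ^ 0 * (hcount T 0 x : ℤ) = 1 := by
      rw [hcount_zero, if_pos hx]; norm_num
    have hstep : ∀ i : ℕ, ((-1 : ℤ) ^ (i + 1) * hcount T (i + 1) x)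
        = ∑ y ∈ Finset.Ioo x ⊤, -((-1 : ℤ) ^ i * hcount T i y) := by
      intro i
      rw [hcount_succ T hT1 hx i, Nat.cast_sum, Finset.mul_sum]
      exact Finset.sum_congr rfl fun y _ => by ring
    rw [h0, Finset.sum_congr rfl fun i _ => hstep i, Finset.sum_comm]
    have hyval : ∀ y ∈ Finset.Ioo x ⊤,
        (∑ i ∈ Finset.range (Fintype.card α), -((-1 : ℤ) ^ i * hcount T i y))
          = IncidenceAlgebra.mu ℤ y ⊤ := by
      intro y hy
      rw [Finset.mem_Ioo] at hy
      have hyT : y ∈ T := hT2 x y hx hy.1.le hy.2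
      have hlt : (Finset.Ioo y ⊤).card < n := by
        rw [← hcard]
        exact Finset.card_lt_card ⟨Finset.Ioo_subset_Ioo_left hy.1.le,
          fun hcon => lt_irrefl y (Finset.mem_Ioo.1 (hcon (Finset.mem_Ioo.2 hy))).1⟩
      have := ih _ hlt y hyT rfl
      rw [Finset.sum_range_succ, hcount_of_big T y le_rfl] at this
      rw [Finset.sum_neg_distrib]
      simpa using congrArg Neg.neg this
    rw [Finset.sum_congr rfl hyval]
    have hmu : IncidenceAlgebra.mu ℤ x ⊤ = -∑ y ∈ Finset.Ioc x ⊤, IncidenceAlgebra.mu ℤ y ⊤ :=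
      IncidenceAlgebra.mu_eq_neg_sum_Ioc_of_ne hxtop.ne
    rw [← Finset.Ioo_insert_right hxtop,
      Finset.sum_insert (fun hcon => lt_irrefl (⊤ : α) (Finset.mem_Ioo.1 hcon).2),
      IncidenceAlgebra.mu_self] at hmu
    rw [hmu]
    ring

open Classical in
lemma sum_mu_eq (T : Set α) (hT1 : ∀ x ∈ T, x < ⊤)
    (hT2 : ∀ x y, x ∈ T → x ≤ y → y < ⊤ → y ∈ T) :
    (∑ x ∈ Finset.univ.filter (· ∈ T), IncidenceAlgebra.mu ℤ x ⊤)
      = -∑ i ∈ Finset.range (Fintype.card α + 1), (-1 : ℤ) ^ i * ccount T i := by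
  have key : ∀ x ∈ Finset.univ.filter (· ∈ T), IncidenceAlgebra.mu ℤ x ⊤
      = -∑ i ∈ Finset.range (Fintype.card α + 1), (-1 : ℤ) ^ i * hcount T i x := by
    intro x hx
    simp only [Finset.mem_filter, Finset.mem_univ, true_and] at hx
    rw [hcount_key T hT1 hT2 _ x hx rfl]
    ring
  rw [Finset.sum_congr rfl key, Finset.sum_neg_distrib, neg_inj, Finset.sum_comm]
  refine Finset.sum_congr rfl fun i _ => ?_
  rw [ccount_eq_sum, Nat.cast_sum, Finset.mul_sum]

end ChainAux


/-! ### Relating `chainCount` to `ccount` -/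

open Classical in
lemma chainCount_eq_ccount {G : Type*} [Group G] [Finite G] (N C : Subgroup G) (i : ℕ) :
    chainCount G N C i = ccount (TCposet G N C) i := by
  set T := TCposet G N C with hT
  have e : {s : LTSeries ↥T // s.length = i} ≃
      {f : Fin (i + 1) → Subgroup G // StrictMono f ∧ ∀ k, f k ∈ T} :=
    { toFun := fun s => ⟨fun k => (s.1 (Fin.cast (by rw [s.2]) k) : Subgroup G),
        fun a b hab => by
          exact_mod_cast s.1.strictMono
            (show (Fin.cast (by rw [s.2]) a) < (Fin.cast (by rw [s.2]) b) by
              rw [Fin.lt_def]; exact hab),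
        fun k => (s.1 (Fin.cast (by rw [s.2]) k)).2⟩
      invFun := fun f => ⟨⟨i, fun k => ⟨f.1 k, f.2.2 k⟩, fun k =>
          show (⟨f.1 k.castSucc, f.2.2 _⟩ : ↥T) < ⟨f.1 k.succ, f.2.2 _⟩ from
            Subtype.mk_lt_mk.2 (f.2.1 (Fin.castSucc_lt_succ (i := k)))⟩, rfl⟩
      left_inv := fun s => by
        apply Subtype.ext
        apply RelSeries.ext s.2.symm
        funext k
        rfl
      right_inv := fun f => by
        apply Subtype.ext
        funext k
        rfl }
  rw [chainCount, Nat.card_congr e, Nat.card_eq_fintype_card, Fintype.card_subtype, ccount]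

open Classical in
lemma eulerCharTC_eq {G : Type*} [Group G] [Finite G] (N C : Subgroup G) :
    eulerCharTC G N C = ∑ i ∈ Finset.range (Fintype.card (Subgroup G) + 1),
      (-1 : ℤ) ^ i * ccount (TCposet G N C) i := by
  rw [eulerCharTC]
  rw [finsum_eq_sum_of_support_subset _ (s := Finset.range (Fintype.card (Subgroup G) + 1))]
  · exact Finset.sum_congr rfl fun i _ => by rw [chainCount_eq_ccount]
  · intro i hi
    simp only [Function.mem_support, ne_eq] at hi
    by_contra hcon
    simp only [Finset.coe_range, Set.mem_Iio] at hcon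
    apply hi
    rw [chainCount_eq_ccount, ccount_of_big _ (by omega)]
    ring

/-! ### Group-theoretic counting lemmas -/

lemma isCyclic_zpowers {G : Type*} [Group G] (g : G) : IsCyclic ↥(Subgroup.zpowers g) := by
  refine ⟨⟨⟨g, Subgroup.mem_zpowers g⟩, ?_⟩⟩
  rintro ⟨x, hx⟩
  obtain ⟨k, hk⟩ := Subgroup.mem_zpowers_iff.1 hx
  exact Subgroup.mem_zpowers_iff.2 ⟨k, Subtype.ext (by push_cast; exact hk)⟩

open Classical in
lemma card_generators (H : Type*) [Group H] [Fintype H] [IsCyclic H] :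
    (Finset.univ.filter fun h : H => Subgroup.zpowers h = ⊤).card
      = Nat.totient (Fintype.card H) := by
  rw [← IsCyclic.card_orderOf_eq_totient (dvd_refl (Fintype.card H))]
  refine congrArg Finset.card (Finset.filter_congr fun h _ => ?_)
  rw [← Nat.card_zpowers, ← Nat.card_eq_fintype_card (α := H), Subgroup.card_eq_iff_eq_top]

open Classical in
lemma card_zpowers_eq_filter {G : Type*} [Group G] [Finite G] [Fintype G] (C : Subgroup G)
    (hC : IsCyclic ↥C) :
    (Finset.univ.filter fun g : G => Subgroup.zpowers g = C).card
      = Nat.totient (Nat.card C) := by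
  letI : Fintype ↥C := Fintype.ofFinite _
  rw [Nat.card_eq_fintype_card, ← card_generators ↥C]
  refine Finset.card_bij (fun g hg => ⟨g, ?_⟩) ?_ ?_ ?_
  · simp only [Finset.mem_filter, Finset.mem_univ, true_and] at hg
    exact hg ▸ Subgroup.mem_zpowers g
  · intro g hg
    simp only [Finset.mem_filter, Finset.mem_univ, true_and] at hg ⊢
    apply Subgroup.map_injective C.subtype_injective
    rw [MonoidHom.map_zpowers, ← MonoidHom.range_eq_map, Subgroup.range_subtype]
    exact hg
  · intro g₁ h₁ g₂ h₂ heq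
    exact congrArg Subtype.val heq
  · intro h hh
    simp only [Finset.mem_filter, Finset.mem_univ, true_and] at hh
    refine ⟨(h : G), ?_, ?_⟩
    · simp only [Finset.mem_filter, Finset.mem_univ, true_and]
      have := congrArg (Subgroup.map C.subtype) hh
      rwa [MonoidHom.map_zpowers, ← MonoidHom.range_eq_map, Subgroup.range_subtype] at this
    · exact rfl

open Classical in
lemma card_subgroup_eq_sum_totient {G : Type*} [Group G] [Finite G] (X : Subgroup G) :
    Nat.card X = ∑ D ∈ Finset.univ.filter
      (fun D : Subgroup G => D ≤ X ∧ IsCyclic ↥D), Nat.totient (Nat.card D) := by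
  letI : Fintype G := Fintype.ofFinite G
  have h1 : Nat.card X = (Finset.univ.filter (· ∈ X)).card := by
    rw [Nat.card_eq_fintype_card, ← Fintype.card_subtype]
  rw [h1, Finset.card_eq_sum_card_fiberwise (f := fun g : G => Subgroup.zpowers g)
      (t := Finset.univ.filter fun D : Subgroup G => D ≤ X ∧ IsCyclic ↥D) (fun g hg => by
        simp only [Finset.mem_filter, Finset.mem_univ, true_and] at hg ⊢
        exact Finset.mem_filter.2 ⟨Finset.mem_univ _, Subgroup.zpowers_le.2 (Finset.mem_filter.1 hg).2, isCyclic_zpowers g⟩)]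
  refine Finset.sum_congr rfl fun D hD => ?_
  simp only [Finset.mem_filter, Finset.mem_univ, true_and] at hD
  rw [Finset.filter_filter, ← card_zpowers_eq_filter D hD.2]
  congr 1
  ext g
  simp only [Finset.mem_filter, Finset.mem_univ, true_and, and_iff_right_iff_imp]
  intro hg
  exact hD.1 (hg ▸ Subgroup.mem_zpowers g)


lemma sup_eq_top_iff_not_le {G : Type*} [Group G] [Finite G] {N : Subgroup G} {p : ℕ}
    (hp : p.Prime) (hidx : N.index = p) (X : Subgroup G) : X ⊔ N = ⊤ ↔ ¬ X ≤ N := by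
  constructor
  · intro h hXN
    rw [sup_eq_right.2 hXN] at h
    rw [h, Subgroup.index_top] at hidx
    have := hp.one_lt
    omega
  · intro hXN
    have hle : N ≤ X ⊔ N := le_sup_right
    have hdvd : (X ⊔ N).index ∣ N.index := Subgroup.index_dvd_of_le hle
    rw [hidx] at hdvd
    rcases (Nat.Prime.eq_one_or_self_of_dvd hp _ hdvd) with h1 | hp'
    · exact Subgroup.index_eq_one.1 h1
    · exfalso
      have hmul := Subgroup.relIndex_mul_index hle
      rw [hp', hidx] at hmul
      have hrel : N.relIndex (X ⊔ N) = 1 :=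
        Nat.eq_of_mul_eq_mul_right hp.pos (by rw [one_mul]; exact hmul)
      exact hXN (le_sup_left.trans (Subgroup.relIndex_eq_one.1 hrel))

open Classical in
/-- If `G` is not cyclic and `N ⊴ G` has prime index `p`, then
`m_{G,N} = (1/|G|) · Σ_{C ≤ N, C cyclic} (1 − χ(T_C(G)))·φ(|C|)`. -/
theorem stmt10 (G : Type*) [Group G] [Finite G] (hG : ¬ IsCyclic G)
    (N : Subgroup G) (hN : N.Normal) (p : ℕ) (hp : p.Prime) (hidx : N.index = p) :
    mBouc G N =
      (1 / (Nat.card G : ℚ)) *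
        ∑ C : Subgroup G, if C ≤ N ∧ IsCyclic ↥C then
            ((1 - eulerCharTC G N C : ℤ) : ℚ) * (Nat.totient (Nat.card C) : ℚ)
          else 0 := by
  classical
  letI : LocallyFiniteOrder (Subgroup G) := Fintype.toLocallyFiniteOrder
  have hmu : ∀ X Y : Subgroup G, subgroupMu G X Y = IncidenceAlgebra.mu ℤ X Y := by
    intro X Y
    rw [subgroupMu]
  have hNtop : N ≠ ⊤ := by
    intro h
    rw [h, Subgroup.index_top] at hidx
    have := hp.one_lt
    omega
  -- the inner μ-sums
  set SZ : Subgroup G → ℤ := fun D =>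
    ∑ X : Subgroup G, if D ≤ X ∧ ¬ X ≤ N then IncidenceAlgebra.mu ℤ X ⊤ else 0 with hSZ
  have hT1 : ∀ D : Subgroup G, ∀ x ∈ TCposet G N D, x < (⊤ : Subgroup G) :=
    fun D x hx => hx.2.1
  have hT2 : ∀ D : Subgroup G, ∀ x y : Subgroup G,
      x ∈ TCposet G N D → x ≤ y → y < ⊤ → y ∈ TCposet G N D := by
    intro D x y hx hxy hy
    exact ⟨hx.1.trans hxy, hy, fun hyN => hx.2.2 (hxy.trans hyN)⟩
  have claimA : ∀ D : Subgroup G, D ≤ N → SZ D = 1 - eulerCharTC G N D := by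
    intro D hDN
    have hset : (Finset.univ.filter fun X : Subgroup G => D ≤ X ∧ ¬ X ≤ N)
        = insert ⊤ (Finset.univ.filter (· ∈ TCposet G N D)) := by
      ext X
      simp only [Finset.mem_filter, Finset.mem_univ, true_and, Finset.mem_insert]
      constructor
      · rintro ⟨hDX, hXN⟩
        rcases eq_or_ne X ⊤ with h | h
        · exact Or.inl h
        · exact Or.inr ⟨hDX, lt_top_iff_ne_top.2 h, hXN⟩
      · rintro (rfl | hX)
        · exact ⟨le_top, fun h => hNtop (top_le_iff.1 h)⟩
        · exact ⟨hX.1, hX.2.2⟩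
    have htopnot : (⊤ : Subgroup G) ∉ Finset.univ.filter (· ∈ TCposet G N D) := by
      simp only [Finset.mem_filter, Finset.mem_univ, true_and]
      intro h
      exact lt_irrefl _ h.2.1
    rw [hSZ]
    simp only
    rw [← Finset.sum_filter, hset, Finset.sum_insert htopnot, IncidenceAlgebra.mu_self,
      sum_mu_eq _ (hT1 D) (hT2 D), eulerCharTC_eq]
    ring
  have claimB : ∀ D : Subgroup G, IsCyclic ↥D → ¬ D ≤ N → SZ D = 0 := by
    intro D hcyc hDN
    have hset : (Finset.univ.filter fun X : Subgroup G => D ≤ X ∧ ¬ X ≤ N)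
        = Finset.Icc D ⊤ := by
      ext X
      simp only [Finset.mem_filter, Finset.mem_univ, true_and, Finset.mem_Icc, le_top, and_true]
      exact ⟨fun h => h.1, fun h => ⟨h, fun hXN => hDN (h.trans hXN)⟩⟩
    have hDtop : D ≠ ⊤ := by
      rintro rfl
      exact hG (isCyclic_of_surjective _ Subgroup.topEquiv.surjective)
    rw [hSZ]
    simp only
    rw [← Finset.sum_filter, hset, IncidenceAlgebra.sum_Icc_mu_left, if_neg hDtop]
  rw [mBouc]
  congr 1
  calc
    ∑ X : Subgroup G, (if X ⊔ N = ⊤ then (Nat.card X : ℚ) * ((subgroupMu G X ⊤ : ℤ) : ℚ) else 0)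
        = ∑ X : Subgroup G, (if ¬ X ≤ N then
            (Nat.card X : ℚ) * ((IncidenceAlgebra.mu ℤ X ⊤ : ℤ) : ℚ) else 0) := by
      refine Finset.sum_congr rfl fun X _ => ?_
      rw [hmu]
      exact if_congr (sup_eq_top_iff_not_le hp hidx X) rfl rfl
    _ = ∑ X : Subgroup G, ∑ D : Subgroup G,
          (if (D ≤ X ∧ IsCyclic ↥D) ∧ ¬ X ≤ N then
            (Nat.totient (Nat.card D) : ℚ) * ((IncidenceAlgebra.mu ℤ X ⊤ : ℤ) : ℚ) else 0) := by
      refine Finset.sum_congr rfl fun X _ => ?_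
      by_cases h : X ≤ N
      · simp [h]
      · simp only [h, not_false_iff, if_true, and_true]
        have hc : (Nat.card X : ℚ)
            = ∑ D ∈ Finset.univ.filter (fun D : Subgroup G => D ≤ X ∧ IsCyclic ↥D),
                (Nat.totient (Nat.card D) : ℚ) := by
          rw [← Nat.cast_sum]
          exact_mod_cast congrArg (Nat.cast (R := ℚ)) (card_subgroup_eq_sum_totient X)
        rw [hc, Finset.sum_mul, Finset.sum_filter]
    _ = ∑ D : Subgroup G, ∑ X : Subgroup G,
          (if (D ≤ X ∧ IsCyclic ↥D) ∧ ¬ X ≤ N then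
            (Nat.totient (Nat.card D) : ℚ) * ((IncidenceAlgebra.mu ℤ X ⊤ : ℤ) : ℚ) else 0) :=
      Finset.sum_comm
    _ = ∑ D : Subgroup G, (if IsCyclic ↥D then
          (Nat.totient (Nat.card D) : ℚ) * ((SZ D : ℤ) : ℚ) else 0) := by
      refine Finset.sum_congr rfl fun D _ => ?_
      by_cases hcyc : IsCyclic ↥D
      · rw [if_pos hcyc, hSZ]
        simp only
        push_cast
        rw [Finset.mul_sum]
        refine Finset.sum_congr rfl fun X _ => ?_
        by_cases h : D ≤ X ∧ ¬ X ≤ N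
        · rw [if_pos ⟨⟨h.1, hcyc⟩, h.2⟩, if_pos h]
        · rw [if_neg (fun hcon => h ⟨hcon.1.1, hcon.2⟩), if_neg h, mul_zero]
      · rw [if_neg hcyc]
        refine Finset.sum_eq_zero fun X _ => ?_
        rw [if_neg (fun hcon => hcyc hcon.1.2)]
    _ = ∑ C : Subgroup G, (if C ≤ N ∧ IsCyclic ↥C then
          ((1 - eulerCharTC G N C : ℤ) : ℚ) * (Nat.totient (Nat.card C) : ℚ) else 0) := by
      refine Finset.sum_congr rfl fun D _ => ?_
      by_cases hcyc : IsCyclic ↥D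
      · by_cases hDN : D ≤ N
        · rw [if_pos hcyc, if_pos ⟨hDN, hcyc⟩, claimA D hDN]
          push_cast
          ring
        · rw [if_pos hcyc, if_neg (fun hcon => hDN hcon.1), claimB D hcyc hDN]
          simp
      · rw [if_neg hcyc, if_neg (fun hcon => hcyc hcon.2)]
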